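/- Let K be a field, let m, n be integers with 0 ≤ m ≤ n, let u ∈ K, let t ∈ K be nonzero, let x = (x_1, …, x_m) ∈ K^m have pairwise distinct nonzero entries, let y = (y_1, …, y_n) ∈ K^n have nonzero entries, and assume t·x_i·y_j ≠ 1 for all 1 ≤ i ≤ m, 1 ≤ j ≤ n. Then F(u; x, y; t) = F(u·t^{m−n−1}; x^{−1}, y^{−1}; t^{−1}), where x^{−1} = (x_1^{−1}, …, x_m^{−1}) and y^{−1} = (y_1^{−1}, …, y_n^{−1}). -/
import Mathlib

open Finset

lemma two_choose_aux (k : ℕ) : 2 * (Nat.choose k 2 : ℤ) = k * (k - 1) := by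
  induction k with
  | zero => simp
  | succ k ih =>
    rw [Nat.choose_succ_succ, Nat.choose_one_right]
    push_cast
    push_cast at ih
    linear_combination ih

noncomputable def bisymF {K : Type*} [Field K] {m n : ℕ} (u t : K)
    (x : Fin m → K) (y : Fin n → K) : K :=
  ∑ I : Finset (Fin m),
    (-u) ^ I.card * t ^ (I.card.choose 2) *
      (∏ i ∈ I, ∏ j ∈ Iᶜ, (t * x i - x j) / (x i - x j)) *
      (∏ i ∈ I, ∏ j, (1 - x i * y j) / (1 - t * x i * y j))

theorem bisymF_inv {K : Type*} [Field K] {m n : ℕ} (hmn : m ≤ n)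
    (u t : K) (ht : t ≠ 0)
    (x : Fin m → K) (y : Fin n → K)
    (hx : Function.Injective x)
    (hx0 : ∀ i, x i ≠ 0) (hy0 : ∀ j, y j ≠ 0)
    (hxy : ∀ (i : Fin m) (j : Fin n), t * x i * y j ≠ 1) :
    bisymF u t x y =
      bisymF (u * t ^ ((m : ℤ) - (n : ℤ) - 1)) t⁻¹
        (fun i => (x i)⁻¹) (fun j => (y j)⁻¹) := by
  unfold bisymF
  refine Finset.sum_congr rfl fun I _ => ?_
  have hk : I.card ≤ m := by simpa using I.card_le_univ
  have hcc : Iᶜ.card = m - I.card := by simp [Finset.card_compl]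
  -- product 1
  have step1 : ∀ i ∈ I, ∀ j ∈ Iᶜ,
      (t⁻¹ * (x i)⁻¹ - (x j)⁻¹) / ((x i)⁻¹ - (x j)⁻¹)
        = t⁻¹ * ((t * x i - x j) / (x i - x j)) := by
    intro i hi j hj
    have hij : x i ≠ x j := hx.ne (fun h => (Finset.mem_compl.mp hj) (h ▸ hi))
    have h1 : x i - x j ≠ 0 := sub_ne_zero.2 hij
    have h1' : x j - x i ≠ 0 := sub_ne_zero.2 hij.symm
    have ha : (x i)⁻¹ * x i = 1 := inv_mul_cancel₀ (hx0 i)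
    have hb : (x j)⁻¹ * x j = 1 := inv_mul_cancel₀ (hx0 j)
    have hc0 : (x i)⁻¹ * (x j)⁻¹ ≠ 0 :=
      mul_ne_zero (inv_ne_zero (hx0 i)) (inv_ne_zero (hx0 j))
    have e1 : t⁻¹ * (x i)⁻¹ - (x j)⁻¹
        = ((x i)⁻¹ * (x j)⁻¹) * (t⁻¹ * x j - x i) := by
      linear_combination ((x j)⁻¹) * ha - (t⁻¹ * (x i)⁻¹) * hb
    have e2 : (x i)⁻¹ - (x j)⁻¹ = ((x i)⁻¹ * (x j)⁻¹) * (x j - x i) := by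
      linear_combination ((x j)⁻¹) * ha - ((x i)⁻¹) * hb
    rw [e1, e2, mul_div_mul_left _ _ hc0, ← mul_div_assoc,
      div_eq_div_iff h1' h1]
    linear_combination (x i * x i - x i * x j) * inv_mul_cancel₀ ht
  have hP1 : (∏ i ∈ I, ∏ j ∈ Iᶜ, (t⁻¹ * (x i)⁻¹ - (x j)⁻¹) / ((x i)⁻¹ - (x j)⁻¹))
      = t⁻¹ ^ (I.card * Iᶜ.card) *
        ∏ i ∈ I, ∏ j ∈ Iᶜ, (t * x i - x j) / (x i - x j) := by
    rw [Finset.prod_congr rfl (fun i hi => Finset.prod_congr rfl (step1 i hi))]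
    simp [Finset.prod_mul_distrib, Finset.prod_const, pow_mul, pow_right_comm]
  -- product 2
  have step2 : ∀ i ∈ I, ∀ j : Fin n,
      (1 - (x i)⁻¹ * (y j)⁻¹) / (1 - t⁻¹ * (x i)⁻¹ * (y j)⁻¹)
        = t * ((1 - x i * y j) / (1 - t * x i * y j)) := by
    intro i _ j
    have hd : 1 - t * x i * y j ≠ 0 := sub_ne_zero.2 (Ne.symm (hxy i j))
    have ha : (x i)⁻¹ * x i = 1 := inv_mul_cancel₀ (hx0 i)
    have hb : (y j)⁻¹ * y j = 1 := inv_mul_cancel₀ (hy0 j)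
    have hc0 : (x i)⁻¹ * (y j)⁻¹ ≠ 0 :=
      mul_ne_zero (inv_ne_zero (hx0 i)) (inv_ne_zero (hy0 j))
    have e3 : 1 - (x i)⁻¹ * (y j)⁻¹
        = ((x i)⁻¹ * (y j)⁻¹) * (x i * y j - 1) := by
      linear_combination (-((y j)⁻¹ * y j)) * ha - hb
    have e4 : 1 - t⁻¹ * (x i)⁻¹ * (y j)⁻¹
        = ((x i)⁻¹ * (y j)⁻¹) * (x i * y j - t⁻¹) := by
      linear_combination (-((y j)⁻¹ * y j)) * ha - hb
    have hden : x i * y j - t⁻¹ ≠ 0 := by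
      intro h
      apply hxy i j
      rw [mul_assoc, sub_eq_zero.mp h, mul_inv_cancel₀ ht]
    rw [e3, e4, mul_div_mul_left _ _ hc0, ← mul_div_assoc,
      div_eq_div_iff hden hd]
    linear_combination (1 - x i * y j) * mul_inv_cancel₀ ht
  have hP2 : (∏ i ∈ I, ∏ j, (1 - (x i)⁻¹ * (y j)⁻¹) / (1 - t⁻¹ * (x i)⁻¹ * (y j)⁻¹))
      = t ^ (I.card * n) * ∏ i ∈ I, ∏ j, (1 - x i * y j) / (1 - t * x i * y j) := by
    rw [Finset.prod_congr rfl (fun i hi => Finset.prod_congr rfl (fun j _ => step2 i hi j))]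
    simp [Finset.prod_mul_distrib, Finset.prod_const, pow_mul, pow_right_comm]
  rw [hP1, hP2]
  have key : (-(u * t ^ ((m : ℤ) - n - 1))) ^ I.card * t⁻¹ ^ (I.card.choose 2) *
      t⁻¹ ^ (I.card * Iᶜ.card) * t ^ (I.card * n)
      = (-u) ^ I.card * t ^ (I.card.choose 2) := by
    rw [show -(u * t ^ ((m : ℤ) - n - 1)) = -u * t ^ ((m : ℤ) - n - 1) by ring, mul_pow,
      inv_pow, inv_pow, ← zpow_natCast t (I.card.choose 2),
      ← zpow_natCast t (I.card * Iᶜ.card), ← zpow_natCast t (I.card * n),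
      ← zpow_neg, ← zpow_neg, ← zpow_natCast (t ^ ((m : ℤ) - n - 1)) I.card,
      ← zpow_mul]
    rw [mul_assoc, mul_assoc, mul_assoc, ← zpow_add₀ ht, ← zpow_add₀ ht, ← zpow_add₀ ht]
    congr 1
    rw [hcc]
    push_cast [Nat.cast_sub hk]
    congr 1
    linear_combination (-1 : ℤ) * two_choose_aux I.card
  calc (-u) ^ I.card * t ^ (I.card.choose 2) *
        (∏ i ∈ I, ∏ j ∈ Iᶜ, (t * x i - x j) / (x i - x j)) *
        (∏ i ∈ I, ∏ j, (1 - x i * y j) / (1 - t * x i * y j))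
      = ((-(u * t ^ ((m : ℤ) - n - 1))) ^ I.card * t⁻¹ ^ (I.card.choose 2) *
          t⁻¹ ^ (I.card * Iᶜ.card) * t ^ (I.card * n)) *
        (∏ i ∈ I, ∏ j ∈ Iᶜ, (t * x i - x j) / (x i - x j)) *
        (∏ i ∈ I, ∏ j, (1 - x i * y j) / (1 - t * x i * y j)) := by rw [key]
    _ = _ := by ring
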